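/- Let e, g, d, j, v_1, v_2 be positive integers with v_1, v_2 > 1, v_1 v_2 ∣ g, g ∣ e, d ∣ e, gcd(v_1, v_2) = gcd(e, j) = gcd(v_1, d) = gcd(v_2, d) = 1, d squarefree, and such that every prime divisor of e divides one of v_1, v_2 or d. Define M := min{ a_1 + a_2 : a_1, a_2 ∈ ℕ, a_1 + a_2 > 0, v_1 a_1 + j v_2 a_2 ≡ 0 (mod e), g a_1 + d g a_2 ≡ 0 (mod e) }. If j v_2 > v_1, then M = min( min_{0 < s < j} ( e·s/v_1 − ⌊ g·s/(j v_1 v_2) ⌋ · e·(v_2 j − v_1)/g ), e/v_2 ), where the inner minimum over the empty range (i.e. when j = 1) is taken to be +∞, so that M = e/v_2 when j = 1. -/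

import Mathlib

theorem key_dvd (e g d j v₁ v₂ a₁ a₂ : ℕ)
    (he : 0 < e) (hgpos : 0 < g)
    (hv₁v₂g : v₁ * v₂ ∣ g) (hge : g ∣ e)
    (h₁ : Nat.gcd v₁ v₂ = 1) (h₂ : Nat.gcd e j = 1)
    (h₄ : Nat.gcd v₂ d = 1)
    (hprimes : ∀ p : ℕ, p.Prime → p ∣ e → p ∣ v₁ ∨ p ∣ v₂ ∨ p ∣ d)
    (hA : e ∣ v₁ * a₁ + j * v₂ * a₂) (hB : e ∣ g * a₁ + d * g * a₂) :
    v₁ * (e / g) ∣ a₂ := by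
  obtain ⟨e', hee⟩ := hge
  have hegq : e / g = e' := by rw [hee]; exact Nat.mul_div_cancel_left _ hgpos
  rw [hegq]
  have he' : 0 < e' := by
    rcases Nat.eq_zero_or_pos e' with h | h
    · subst h; simp at hee; omega
    · exact h
  have he'dvd : e' ∣ e := ⟨g, by rw [hee]; ring⟩
  have hv₁e : v₁ ∣ e := (dvd_mul_right v₁ v₂).trans (hv₁v₂g.trans ⟨e', hee⟩)
  have hv₂e : v₂ ∣ e := (dvd_mul_left v₂ v₁).trans (hv₁v₂g.trans ⟨e', hee⟩)
  have hB' : e' ∣ a₁ + d * a₂ := by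
    have h1 : g * e' ∣ g * (a₁ + d * a₂) := by
      have h2 : g * (a₁ + d * a₂) = g * a₁ + d * g * a₂ := by ring
      rw [← hee, h2]; exact hB
    exact (Nat.mul_dvd_mul_iff_left hgpos).mp h1
  -- coprimality of e' with v₁*d - j*v₂
  have hcop : IsCoprime (e' : ℤ) ((v₁ : ℤ) * d - j * v₂) := by
    rw [Int.isCoprime_iff_nat_coprime]
    by_contra hcon
    obtain ⟨p, hp, hp1, hp2⟩ := Nat.Prime.not_coprime_iff_dvd.mp hcon
    have hpe' : p ∣ e' := by simpa using hp1
    have hpz : (p : ℤ) ∣ (v₁ : ℤ) * d - j * v₂ := by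
      have := Int.natAbs_dvd_natAbs.mp (by simpa using hp2 : (p : ℤ).natAbs ∣ ((v₁ : ℤ) * d - j * v₂).natAbs)
      exact this
    have hpe : p ∣ e := hpe'.trans he'dvd
    have hp1' : p ≠ 1 := hp.ne_one
    rcases hprimes p hp hpe with hpv | hpv | hpv
    · have h1 : (p : ℤ) ∣ (v₁ : ℤ) * d := (Int.natCast_dvd_natCast.mpr hpv).mul_right _
      have h2 : (p : ℤ) ∣ (j : ℤ) * v₂ := by
        have := dvd_sub h1 hpz
        simpa using this
      have hjv : p ∣ j * v₂ := by exact_mod_cast h2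
      rcases (Nat.Prime.dvd_mul hp).mp hjv with h | h
      · have : p ∣ Nat.gcd e j := Nat.dvd_gcd hpe h
        rw [h₂] at this; exact hp1' (Nat.dvd_one.mp this)
      · have : p ∣ Nat.gcd v₁ v₂ := Nat.dvd_gcd hpv h
        rw [h₁] at this; exact hp1' (Nat.dvd_one.mp this)
    · have h1 : (p : ℤ) ∣ (j : ℤ) * v₂ := (Int.natCast_dvd_natCast.mpr hpv).mul_left _
      have h2 : (p : ℤ) ∣ (v₁ : ℤ) * d := by
        have := dvd_add hpz h1
        simpa using this
      have hjv : p ∣ v₁ * d := by exact_mod_cast h2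
      rcases (Nat.Prime.dvd_mul hp).mp hjv with h | h
      · have : p ∣ Nat.gcd v₁ v₂ := Nat.dvd_gcd h hpv
        rw [h₁] at this; exact hp1' (Nat.dvd_one.mp this)
      · have : p ∣ Nat.gcd v₂ d := Nat.dvd_gcd hpv h
        rw [h₄] at this; exact hp1' (Nat.dvd_one.mp this)
    · have h1 : (p : ℤ) ∣ (v₁ : ℤ) * d := (Int.natCast_dvd_natCast.mpr hpv).mul_left _
      have h2 : (p : ℤ) ∣ (j : ℤ) * v₂ := by
        have := dvd_sub h1 hpz
        simpa using this
      have hjv : p ∣ j * v₂ := by exact_mod_cast h2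
      rcases (Nat.Prime.dvd_mul hp).mp hjv with h | h
      · have : p ∣ Nat.gcd e j := Nat.dvd_gcd hpe h
        rw [h₂] at this; exact hp1' (Nat.dvd_one.mp this)
      · have : p ∣ Nat.gcd v₂ d := Nat.dvd_gcd h hpv
        rw [h₄] at this; exact hp1' (Nat.dvd_one.mp this)
  have d2 : (e' : ℤ) ∣ ((v₁ * a₁ + j * v₂ * a₂ : ℕ) : ℤ) :=
    Int.natCast_dvd_natCast.mpr (he'dvd.trans hA)
  have dB : (e' : ℤ) ∣ ((a₁ + d * a₂ : ℕ) : ℤ) := Int.natCast_dvd_natCast.mpr hB'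
  have hZa₂ : (e' : ℤ) ∣ ((v₁ : ℤ) * d - j * v₂) * a₂ := by
    have := dvd_sub (dB.mul_left (v₁ : ℤ)) d2
    convert this using 1
    · rfl
    push_cast; ring
  have hZa₁ : (e' : ℤ) ∣ ((v₁ : ℤ) * d - j * v₂) * a₁ := by
    have := dvd_sub (d2.mul_left (d : ℤ)) (dB.mul_left ((j : ℤ) * v₂))
    convert this using 1
    · rfl
    push_cast; ring
  have ha₂' : e' ∣ a₂ := by exact_mod_cast hcop.dvd_of_dvd_mul_left hZa₂
  have ha₁' : e' ∣ a₁ := by exact_mod_cast hcop.dvd_of_dvd_mul_left hZa₁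
  obtain ⟨b₁, hb₁⟩ := ha₁'
  obtain ⟨b₂, hb₂⟩ := ha₂'
  have hgb : g ∣ v₁ * b₁ + j * v₂ * b₂ := by
    have h2 : g * e' ∣ (v₁ * b₁ + j * v₂ * b₂) * e' := by
      rw [← hee]
      have h3 : (v₁ * b₁ + j * v₂ * b₂) * e' = v₁ * a₁ + j * v₂ * a₂ := by
        rw [hb₁, hb₂]; ring
      rw [h3]; exact hA
    exact (Nat.mul_dvd_mul_iff_right he').mp h2
  have hv₁g : v₁ ∣ g := (dvd_mul_right v₁ v₂).trans hv₁v₂g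
  have hv₁jb : v₁ ∣ j * v₂ * b₂ := by
    have h1 : v₁ ∣ v₁ * b₁ + j * v₂ * b₂ := hv₁g.trans hgb
    have h2 := Nat.dvd_sub h1 (dvd_mul_right v₁ b₁)
    rwa [Nat.add_sub_cancel_left] at h2
  have hcopv : Nat.Coprime v₁ (j * v₂) :=
    Nat.Coprime.mul_right (Nat.Coprime.coprime_dvd_left hv₁e h₂) h₁
  have hv₁b₂ : v₁ ∣ b₂ := hcopv.dvd_of_dvd_mul_left hv₁jb
  obtain ⟨c, hc⟩ := hv₁b₂
  exact ⟨c, by rw [hb₂, hc]; ring⟩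

/-- If `jv₂ > v₁`, the minimal value `M` of `a₁ + a₂ > 0` over nonnegative solutions of
`v₁a₁ + jv₂a₂ ≡ 0 (mod e)`, `ga₁ + dga₂ ≡ 0 (mod e)` equals
`min( min_{0<s<j} ( es/v₁ − ⌊gs/(jv₁v₂)⌋·e(v₂j−v₁)/g ), e/v₂ )`, where the inner
minimum over an empty range (`j = 1`) is `+∞` (so that `M = e/v₂` when `j = 1`). -/
theorem stmt11 (e g d j v₁ v₂ : ℕ)
    (he : 0 < e) (hgpos : 0 < g) (hd : 0 < d) (hj : 0 < j)
    (hv₁ : 1 < v₁) (hv₂ : 1 < v₂)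
    (hv₁v₂g : v₁ * v₂ ∣ g) (hge : g ∣ e) (hde : d ∣ e)
    (h₁ : Nat.gcd v₁ v₂ = 1) (h₂ : Nat.gcd e j = 1)
    (h₃ : Nat.gcd v₁ d = 1) (h₄ : Nat.gcd v₂ d = 1)
    (hsf : Squarefree d)
    (hprimes : ∀ p : ℕ, p.Prime → p ∣ e → p ∣ v₁ ∨ p ∣ v₂ ∨ p ∣ d)
    (hcase : v₁ < j * v₂)
    (M : ℕ)
    (hM : IsLeast {m : ℕ | 0 < m ∧ ∃ a₁ a₂ : ℕ, a₁ + a₂ = m ∧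
        e ∣ v₁ * a₁ + j * v₂ * a₂ ∧ e ∣ g * a₁ + d * g * a₂} M) :
    ((M : ℤ) : WithTop ℤ) =
      min
        ((Finset.Ioo 0 j).inf (fun s =>
          ((((e / v₁ * s : ℕ) : ℤ) -
            ((g * s / (j * v₁ * v₂) : ℕ) : ℤ) * ((e * (v₂ * j - v₁) / g : ℕ) : ℤ) : ℤ) :
            WithTop ℤ)))
        (((e / v₂ : ℕ) : ℤ) : WithTop ℤ) := by
  obtain ⟨eg, hee⟩ := id hge
  have hegq : e / g = eg := by rw [hee]; exact Nat.mul_div_cancel_left _ hgpos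
  have heg : 0 < eg := by
    rcases Nat.eq_zero_or_pos eg with h | h
    · subst h; simp at hee; omega
    · exact h
  have hv₁pos : 0 < v₁ := by omega
  have hv₂pos : 0 < v₂ := by omega
  have hv₁e : v₁ ∣ e := (dvd_mul_right v₁ v₂).trans (hv₁v₂g.trans hge)
  have hv₂e : v₂ ∣ e := (dvd_mul_left v₂ v₁).trans (hv₁v₂g.trans hge)
  have hv₁g : v₁ ∣ g := (dvd_mul_right v₁ v₂).trans hv₁v₂g
  have hv₂g : v₂ ∣ g := (dvd_mul_left v₂ v₁).trans hv₁v₂g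
  set A := e / v₁ with hAdef
  set Q := e / v₂ with hQdef
  have hAv : A * v₁ = e := Nat.div_mul_cancel hv₁e
  have hQv : Q * v₂ = e := Nat.div_mul_cancel hv₂e
  have hApos : 0 < A := Nat.div_pos (Nat.le_of_dvd he hv₁e) hv₁pos
  have hQpos : 0 < Q := Nat.div_pos (Nat.le_of_dvd he hv₂e) hv₂pos
  have hv₁le : v₁ ≤ v₂ * j := by rw [mul_comm]; omega
  have hT : e * (v₂ * j - v₁) / g = eg * (v₂ * j - v₁) := by
    rw [hee, mul_assoc]; exact Nat.mul_div_cancel_left _ hgpos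
  -- integer casts of basic facts
  have hAvZ : (A : ℤ) * v₁ = e := by exact_mod_cast hAv
  have hQvZ : (Q : ℤ) * v₂ = e := by exact_mod_cast hQv
  have heeZ : (e : ℤ) = g * eg := by exact_mod_cast hee
  -- the e/v₂ witness
  have hQmem : Q ∈ {m : ℕ | 0 < m ∧ ∃ a₁ a₂ : ℕ, a₁ + a₂ = m ∧
      e ∣ v₁ * a₁ + j * v₂ * a₂ ∧ e ∣ g * a₁ + d * g * a₂} := by
    obtain ⟨g₂, hg₂⟩ := hv₂g
    refine ⟨hQpos, 0, Q, by simp, ?_, ?_⟩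
    · have : v₁ * 0 + j * v₂ * Q = e * j := by
        rw [mul_assoc, mul_comm v₂ Q, hQv]; ring
      rw [this]; exact dvd_mul_right e j
    · have : g * 0 + d * g * Q = e * (d * g₂) := by
        rw [hg₂]
        have : d * (v₂ * g₂) * Q = (Q * v₂) * (d * g₂) := by ring
        rw [this, hQv]; ring
      rw [this]; exact dvd_mul_right _ _
  have hMQ : M ≤ Q := hM.2 hQmem
  -- upper bound: M ≤ value(s) for each s ∈ Ioo 0 j
  have hval : ∀ s ∈ Finset.Ioo 0 j,
      ((M : ℤ) : WithTop ℤ) ≤ (((A * s : ℕ) : ℤ) -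
        ((g * s / (j * v₁ * v₂) : ℕ) : ℤ) * ((e * (v₂ * j - v₁) / g : ℕ) : ℤ) : ℤ) := by
    intro s hs
    simp only [Finset.mem_Ioo] at hs
    obtain ⟨hs0, hsj⟩ := hs
    set k := g * s / (j * v₁ * v₂) with hkdef
    have hkle : k * (j * v₂ * eg) ≤ A * s := by
      have h1 : k * (j * v₁ * v₂) ≤ g * s := Nat.div_mul_le_self _ _
      have h2 : (k * (j * v₂ * eg)) * v₁ ≤ (A * s) * v₁ := by
        calc (k * (j * v₂ * eg)) * v₁ = k * (j * v₁ * v₂) * eg := by ring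
          _ ≤ g * s * eg := Nat.mul_le_mul_right _ h1
          _ = (g * eg) * s := by ring
          _ = e * s := by rw [← hee]
          _ = (A * v₁) * s := by rw [hAv]
          _ = (A * s) * v₁ := by ring
      exact Nat.le_of_mul_le_mul_right h2 hv₁pos
    set a₁ := A * s - k * (j * v₂ * eg) with ha₁def
    set a₂ := k * (v₁ * eg) with ha₂def
    have hmem : a₁ + a₂ ∈ {m : ℕ | 0 < m ∧ ∃ b₁ b₂ : ℕ, b₁ + b₂ = m ∧
        e ∣ v₁ * b₁ + j * v₂ * b₂ ∧ e ∣ g * b₁ + d * g * b₂} := by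
      refine ⟨?_, a₁, a₂, rfl, ?_, ?_⟩
      · rcases Nat.eq_zero_or_pos k with hk0 | hkpos
        · have : a₁ = A * s := by rw [ha₁def, hk0]; simp
          have hpos : 0 < A * s := Nat.mul_pos hApos hs0
          omega
        · have : 0 < a₂ := by positivity
          omega
      · have hcast : (v₁ : ℤ) * a₁ + j * v₂ * a₂ = e * s := by
          rw [ha₁def, ha₂def]
          push_cast [hkle]
          linear_combination (s : ℤ) * hAvZ
        have : v₁ * a₁ + j * v₂ * a₂ = e * s := by exact_mod_cast hcast
        rw [this]; exact dvd_mul_right e s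
      · obtain ⟨g₁, hg₁⟩ := hv₁g
        have hg₁Z : (g : ℤ) = v₁ * g₁ := by exact_mod_cast hg₁
        have hcast : (g : ℤ) * a₁ + d * g * a₂ =
            e * (g₁ * s - k * (j * v₂) + d * (k * v₁)) := by
          rw [ha₁def, ha₂def]
          push_cast [hkle]
          linear_combination (s * (A:ℤ)) * hg₁Z + (s * (g₁:ℤ)) * hAvZ
            + ((k:ℤ)*(j*v₂) - (d:ℤ) * (k*v₁)) * heeZ
        refine Int.natCast_dvd_natCast.mp ?_
        rw [show ((g * a₁ + d * g * a₂ : ℕ) : ℤ) = (g:ℤ)*a₁ + d*g*a₂ by push_cast; ring, hcast]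
        exact Dvd.intro _ rfl
    have hMle : M ≤ a₁ + a₂ := hM.2 hmem
    have hvalZ : ((a₁ + a₂ : ℕ) : ℤ) = ((A * s : ℕ) : ℤ) -
        ((k : ℕ) : ℤ) * ((e * (v₂ * j - v₁) / g : ℕ) : ℤ) := by
      rw [hT, ha₁def, ha₂def]
      push_cast [hkle, hv₁le]
      ring
    rw [show ((g * s / (j * v₁ * v₂) : ℕ) : ℤ) = (k : ℤ) from rfl]
    rw [← hvalZ]
    exact_mod_cast WithTop.coe_le_coe.mpr (by exact_mod_cast hMle)
  -- now the two directions
  refine le_antisymm ?_ ?_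
  · refine le_min ?_ ?_
    · refine Finset.le_inf ?_
      intro s hs
      have := hval s hs
      rw [hAdef] at this
      exact this
    · exact WithTop.coe_le_coe.mpr (by exact_mod_cast hMQ)
  · -- lower bound
    obtain ⟨hMpos, a₁, a₂, hsum, hdvd1, hdvd2⟩ := hM.1
    obtain ⟨m, hm⟩ := hdvd1
    have hm1 : 1 ≤ m := by
      rcases Nat.eq_zero_or_pos m with h | h
      · exfalso
        rw [h, mul_zero] at hm
        have h1 : v₁ * a₁ = 0 := by omega
        have h2 : j * v₂ * a₂ = 0 := by omega
        have : a₁ = 0 := by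
          rcases Nat.mul_eq_zero.mp h1 with h' | h' <;> omega
        have : a₂ = 0 := by
          rcases Nat.mul_eq_zero.mp h2 with h' | h'
          · rcases Nat.mul_eq_zero.mp h' with h'' | h'' <;> omega
          · omega
        omega
      · exact h
    obtain ⟨c, hc⟩ : v₁ * eg ∣ a₂ := by
      have := key_dvd e g d j v₁ v₂ a₁ a₂ he hgpos hv₁v₂g hge h₁ h₂ h₄ hprimes
        ⟨m, hm⟩ hdvd2
      rwa [hegq] at this
    have hmZ : (v₁ : ℤ) * a₁ + j * v₂ * a₂ = e * m := by exact_mod_cast hm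
    have hsZ : (a₁ : ℤ) + a₂ = M := by exact_mod_cast hsum
    by_cases hmj : j ≤ m
    · -- show Q ≤ M
      have hQM : Q ≤ M := by
        by_cases hb : Q ≤ a₂
        · omega
        · push_neg at hb
          have hbZ : (a₂ : ℤ) + 1 ≤ Q := by exact_mod_cast hb
          have hmjZ : (j : ℤ) ≤ m := by exact_mod_cast hmj
          have hcaseZ : (v₁ : ℤ) < j * v₂ := by exact_mod_cast hcase
          have hkey : (v₁ : ℤ) * M + ((j : ℤ) * v₂ - v₁) * a₂ = e * m := by
            linear_combination (-(v₁:ℤ)) * hsZ + hmZ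
          have hep : (0:ℤ) ≤ e := by positivity
          have h6 : (e:ℤ) * j ≤ e * m := mul_le_mul_of_nonneg_left hmjZ hep
          have h7 : (e:ℤ) * j = Q * v₂ * j := by rw [← hQvZ]
          have h8 : ((j:ℤ) * v₂ - v₁) * a₂ ≤ ((j:ℤ) * v₂ - v₁) * ((Q:ℤ) - 1) :=
            mul_le_mul_of_nonneg_left (by linarith) (by linarith)
          have h9 : (v₁:ℤ) * Q < (v₁:ℤ) * M := by linarith
          have h10 : (Q:ℤ) < M := lt_of_mul_lt_mul_left h9 (by positivity)
          exact_mod_cast le_of_lt h10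
      calc min ((Finset.Ioo 0 j).inf _) (((Q : ℤ) : WithTop ℤ)) ≤ ((Q : ℤ) : WithTop ℤ) :=
            min_le_right _ _
        _ ≤ ((M : ℤ) : WithTop ℤ) := WithTop.coe_le_coe.mpr (by exact_mod_cast hQM)
    · push_neg at hmj
      have hmIoo : m ∈ Finset.Ioo 0 j := Finset.mem_Ioo.mpr ⟨hm1, hmj⟩
      have hcle : c ≤ g * m / (j * v₁ * v₂) := by
        rw [Nat.le_div_iff_mul_le (by positivity)]
        have h1 : (c * (j * v₁ * v₂)) * eg ≤ (g * m) * eg := by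
          calc (c * (j * v₁ * v₂)) * eg = j * v₂ * (v₁ * eg * c) := by ring
            _ = j * v₂ * a₂ := by rw [← hc]
            _ ≤ v₁ * a₁ + j * v₂ * a₂ := Nat.le_add_left _ _
            _ = e * m := hm
            _ = (g * m) * eg := by rw [hee]; ring
        exact Nat.le_of_mul_le_mul_right h1 heg
      have hcZ : (c : ℤ) ≤ ((g * m / (j * v₁ * v₂) : ℕ) : ℤ) := by exact_mod_cast hcle
      have hcaseZ : (v₁ : ℤ) < j * v₂ := by exact_mod_cast hcase
      have hcZ' : (a₂ : ℤ) = c * (v₁ * eg) := by rw [hc]; push_cast; ring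
      have hMeq : (M : ℤ) = A * m - ((j : ℤ) * v₂ - v₁) * (eg * c) := by
        have h1 : (v₁ : ℤ) * M = v₁ * ((A : ℤ) * m - ((j : ℤ) * v₂ - v₁) * (eg * c)) := by
          linear_combination (-(v₁:ℤ)) * hsZ + hmZ + (-(m:ℤ)) * hAvZ + ((v₁:ℤ) - (j:ℤ)*v₂) * hcZ'
        have hv₁Z : (v₁ : ℤ) ≠ 0 := by exact_mod_cast hv₁pos.ne'
        exact mul_left_cancel₀ hv₁Z h1
      have hTm : ((e * (v₂ * j - v₁) / g : ℕ) : ℤ) = eg * ((v₂ : ℤ) * j - v₁) := by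
        rw [hT]; push_cast [hv₁le]; ring
      have hfm : (((A * m : ℕ) : ℤ) -
          ((g * m / (j * v₁ * v₂) : ℕ) : ℤ) * ((e * (v₂ * j - v₁) / g : ℕ) : ℤ) : ℤ) ≤ (M : ℤ) := by
        rw [hTm, hMeq]
        have hnn : (0:ℤ) ≤ ((j : ℤ) * v₂ - v₁) * eg :=
          mul_nonneg (by linarith) (by positivity)
        have hmul := mul_le_mul_of_nonneg_left hcZ hnn
        push_cast at hmul ⊢
        linarith [hmul]

      refine le_trans (min_le_left _ _) (le_trans (Finset.inf_le hmIoo) ?_)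
      exact WithTop.coe_le_coe.mpr hfm
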